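/- Suppose p : S → [0,1] satisfies p(s) = 1 for all s ∈ T and p(s) = ∑_α σ(s)(α)·∑_{s'} P(s,α)(s')·p(s') for all s ∉ T, where σ is a strategy of a finite MDP with transition function P. If additionally q : S → [0,1] satisfies the same constraints with ≥ in place of = (q(s) ≥ 1 on T and q(s) ≥ ∑_α σ(s)(α)·∑_{s'} P(s,α)(s')·q(s') off T), and from every state some state of T is reachable under σ with positive probability within |S| steps, then q(s) ≥ p(s) for all s. -/
import Mathlib


/-- n-step reachability probability of `T` under strategy `σ`. -/
def nreach {S A : Type*} [Fintype S] [Fintype A]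
    (P : S → A → S → ℝ) (σ : S → A → ℝ) (T : Set S) [DecidablePred (· ∈ T)] :
    ℕ → S → ℝ
  | 0, s => if s ∈ T then 1 else 0
  | n + 1, s =>
      if s ∈ T then 1
      else ∑ α, σ s α * ∑ s', P s α s' * nreach P σ T n s'

theorem superharmonic_dominates_reachability {S A : Type*} [Fintype S] [Fintype A]
    (P : S → A → S → ℝ) (σ : S → A → ℝ) (T : Set S) [DecidablePred (· ∈ T)]
    (hP : ∀ s α, (∀ s', 0 ≤ P s α s') ∧ ∑ s', P s α s' = 1)
    (hσ : ∀ s, (∀ α, 0 ≤ σ s α) ∧ ∑ α, σ s α = 1)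
    (p q : S → ℝ)
    (hp01 : ∀ s, 0 ≤ p s ∧ p s ≤ 1) (hq01 : ∀ s, 0 ≤ q s ∧ q s ≤ 1)
    (hpT : ∀ s ∈ T, p s = 1)
    (hpE : ∀ s ∉ T, p s = ∑ α, σ s α * ∑ s', P s α s' * p s')
    (hqT : ∀ s ∈ T, 1 ≤ q s)
    (hqE : ∀ s ∉ T, ∑ α, σ s α * ∑ s', P s α s' * q s' ≤ q s)
    (hreach : ∀ s, 0 < nreach P σ T (Fintype.card S) s) :
    ∀ s, p s ≤ q s := by
  by_contra h
  push_neg at h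
  obtain ⟨s0, hs0⟩ := h
  obtain ⟨m, -, hm⟩ := Finset.exists_max_image Finset.univ (fun s => p s - q s)
    ⟨s0, Finset.mem_univ s0⟩
  have hM : ∀ s, p s - q s ≤ p m - q m := fun s => hm s (Finset.mem_univ s)
  set M := p m - q m with hMdef
  have hMpos : 0 < M := lt_of_lt_of_le (by linarith) (hM s0)
  -- no max state is in T
  have hnotT : ∀ s, p s - q s = M → s ∉ T := by
    intro s hs hsT
    have h1 := hpT s hsT
    have h2 := hqT s hsT
    linarith
  -- the set of max states is closed under positive-probability transitions
  have hclosed : ∀ s, p s - q s = M → ∀ α s', 0 < σ s α → 0 < P s α s' →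
      p s' - q s' = M := by
    intro s hs α₀ s₀' hσa hPs'
    have hsT := hnotT s hs
    -- key sum of nonnegative terms that equals ≤ 0
    have key : ∑ α, σ s α * ∑ s', P s α s' * (M - (p s' - q s')) ≤ 0 := by
      have e1 : ∀ α, ∑ s', P s α s' * (M - (p s' - q s'))
          = M - ∑ s', P s α s' * p s' + ∑ s', P s α s' * q s' := by
        intro α
        have h2 := (hP s α).2
        calc ∑ s', P s α s' * (M - (p s' - q s'))
            = (∑ s', P s α s') * M - ∑ s', P s α s' * p s'
              + ∑ s', P s α s' * q s' := by
              rw [Finset.sum_mul]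
              rw [← Finset.sum_sub_distrib, ← Finset.sum_add_distrib]
              apply Finset.sum_congr rfl
              intro x _
              ring
          _ = M - ∑ s', P s α s' * p s' + ∑ s', P s α s' * q s' := by
              rw [h2, one_mul]
      calc ∑ α, σ s α * ∑ s', P s α s' * (M - (p s' - q s'))
          = ∑ α, σ s α * (M - ∑ s', P s α s' * p s' + ∑ s', P s α s' * q s') := by
            apply Finset.sum_congr rfl; intro α _; rw [e1 α]
        _ = (∑ α, σ s α) * M - (∑ α, σ s α * ∑ s', P s α s' * p s')
            + ∑ α, σ s α * ∑ s', P s α s' * q s' := by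
            rw [Finset.sum_mul, ← Finset.sum_sub_distrib, ← Finset.sum_add_distrib]
            apply Finset.sum_congr rfl; intro α _; ring
        _ = M - p s + ∑ α, σ s α * ∑ s', P s α s' * q s' := by
            rw [(hσ s).2, one_mul, ← hpE s hsT]
        _ ≤ M - p s + q s := by linarith [hqE s hsT]
        _ = 0 := by rw [← hs]; ring
    have nonneg : ∀ α ∈ Finset.univ,
        0 ≤ σ s α * ∑ s', P s α s' * (M - (p s' - q s')) := by
      intro α _
      apply mul_nonneg ((hσ s).1 α)
      apply Finset.sum_nonneg
      intro x _
      exact mul_nonneg ((hP s α).1 x) (by linarith [hM x])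
    have hzero : ∑ α, σ s α * ∑ s', P s α s' * (M - (p s' - q s')) = 0 :=
      le_antisymm key (Finset.sum_nonneg nonneg)
    have hterm := (Finset.sum_eq_zero_iff_of_nonneg nonneg).mp hzero α₀ (Finset.mem_univ α₀)
    have hinner : ∑ s', P s α₀ s' * (M - (p s' - q s')) = 0 := by
      rcases mul_eq_zero.mp hterm with h1 | h1
      · exact absurd h1 (ne_of_gt hσa)
      · exact h1
    have nonneg2 : ∀ x ∈ Finset.univ, 0 ≤ P s α₀ x * (M - (p x - q x)) := by
      intro x _
      exact mul_nonneg ((hP s α₀).1 x) (by linarith [hM x])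
    have := (Finset.sum_eq_zero_iff_of_nonneg nonneg2).mp hinner s₀' (Finset.mem_univ s₀')
    rcases mul_eq_zero.mp this with h1 | h1
    · exact absurd h1 (ne_of_gt hPs')
    · linarith
  -- on max states, nreach is 0 at every horizon
  have hzero : ∀ n s, p s - q s = M → nreach P σ T n s = 0 := by
    intro n
    induction n with
    | zero =>
      intro s hs
      simp [nreach, hnotT s hs]
    | succ n ih =>
      intro s hs
      have hsT := hnotT s hs
      simp only [nreach, if_neg hsT]
      apply Finset.sum_eq_zero
      intro α _
      rcases lt_or_eq_of_le ((hσ s).1 α) with hσa | hσa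
      · rw [mul_eq_zero]; right
        apply Finset.sum_eq_zero
        intro s' _
        rcases lt_or_eq_of_le ((hP s α).1 s') with hPs' | hPs'
        · rw [ih s' (hclosed s hs α s' hσa hPs'), mul_zero]
        · rw [← hPs', zero_mul]
      · rw [← hσa, zero_mul]
  have := hreach m
  rw [hzero (Fintype.card S) m rfl] at this
  exact lt_irrefl 0 this
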